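/- arXiv:2509.02996 — 6 statements merged into one kernel-verified Lean document; each statement's English description precedes it below -/
import Mathlib

section
/- Let π be a G-invariant probability distribution on a finite set X, and let P be π-reversible (i.e., π(x)P(x,y) = π(y)P(y,x) for all x,y). If ν is a probability measure on G × G satisfying (g,h) equal in distribution to (h^{-1}, g^{-1}), then P_da := E_{(g,h)∼ν}[U_g P U_h] is π-reversible. -/
open Matrix

/-- The permutation matrix of the action of `g`: `(U_g f)(x) = f(g • x)`. -/
noncomputable def permMat {X G : Type*} [Fintype X] [DecidableEq X] [Group G] [MulAction G X]
    (g : G) : Matrix X X ℝ :=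
  fun x y => if y = g • x then 1 else 0

/-- The double-average `P_da = Σ_{(g,h)} ν(g,h) U_g P U_h`. -/
noncomputable def doubleAvg {X G : Type*} [Fintype X] [DecidableEq X] [Fintype G] [Group G]
    [MulAction G X] (ν : G × G → ℝ) (P : Matrix X X ℝ) : Matrix X X ℝ :=
  ∑ p : G × G, ν p • (permMat p.1 * P * permMat p.2)

lemma sandwich_apply {X G : Type*} [Fintype X] [DecidableEq X] [Group G] [MulAction G X]
    (g h : G) (P : Matrix X X ℝ) (x y : X) :
    ((permMat g * P * permMat h : Matrix X X ℝ)) x y = P (g • x) (h⁻¹ • y) := by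
  simp only [Matrix.mul_apply, permMat]
  have : ∀ z : X, (∑ w : X, (if w = g • x then 1 else 0) * P w z) = P (g • x) z := by
    intro z
    rw [Finset.sum_eq_single (g • x)] <;> simp +contextual
  simp only [this]
  rw [Finset.sum_eq_single (h⁻¹ • y)]
  · simp
  · intro b _ hb
    rw [if_neg, mul_zero]
    intro hy; exact hb (by rw [hy, inv_smul_smul])
  · simp

/-- if `π` is `G`-invariant with full support, `P` is `π`-reversible and
`ν(g,h) = ν(h⁻¹,g⁻¹)`, then `P_da` is `π`-reversible. -/
theorem stmt3 {X G : Type*} [Fintype X] [DecidableEq X] [Fintype G] [Group G] [MulAction G X]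
    (π : X → ℝ) (hπpos : ∀ x, 0 < π x) (hπsum : ∑ x, π x = 1)
    (hπinv : ∀ (g : G) (x : X), π (g • x) = π x)
    (P : Matrix X X ℝ) (hPnn : ∀ x y, 0 ≤ P x y) (hProw : ∀ x, ∑ y, P x y = 1)
    (hPrev : ∀ x y, π x * P x y = π y * P y x)
    (ν : G × G → ℝ) (hνnn : ∀ p, 0 ≤ ν p) (hνsum : ∑ p : G × G, ν p = 1)
    (hνsymm : ∀ g h : G, ν (g, h) = ν (h⁻¹, g⁻¹)) :
    ∀ x y, π x * doubleAvg ν P x y = π y * doubleAvg ν P y x := by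
  intro x y
  unfold doubleAvg
  simp only [Matrix.sum_apply, Matrix.smul_apply, sandwich_apply, smul_eq_mul,
    Finset.mul_sum]
  refine Fintype.sum_equiv
    (Equiv.prodComm G G |>.trans (Equiv.prodCongr (Equiv.inv G) (Equiv.inv G))) _ _ ?_
  rintro ⟨g, h⟩
  simp only [Equiv.trans_apply, Equiv.prodComm_apply, Prod.swap_prod_mk,
    Equiv.prodCongr_apply, Prod.map, Equiv.inv_apply]
  rw [hνsymm g h]
  have key : π x * P (g • x) (h⁻¹ • y) = π y * P (h⁻¹ • y) (g⁻¹⁻¹ • x) := by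
    calc π x * P (g • x) (h⁻¹ • y)
        = π (g • x) * P (g • x) (h⁻¹ • y) := by rw [hπinv]
      _ = π (h⁻¹ • y) * P (h⁻¹ • y) (g • x) := hPrev _ _
      _ = π y * P (h⁻¹ • y) (g⁻¹⁻¹ • x) := by rw [hπinv, inv_inv]
  rw [mul_left_comm, key, mul_left_comm]
end

section
/- Let G₁ ≤ G₂ be finite groups acting on a finite set X with π invariant under G₂, and let P be π-stationary. Writing (P_la)_ra(G_i) = Q_i P Q_i with Q_i := (1/|G_i|) Σ_{g∈G_i} U_g, we have γ((P_la)_ra(G₂)) ≥ γ((P_la)_ra(G₁)), where γ(K) = 1 − ‖K‖_{L²₀(π)→L²₀(π)}. -/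
open Matrix

/-- The `L²(π)` norm of a function. -/
noncomputable def pNorm {X : Type*} [Fintype X] (π f : X → ℝ) : ℝ :=
  Real.sqrt (∑ x, π x * f x ^ 2)

/-- Operator norm of `K` restricted to `L²₀(π)`. -/
noncomputable def opNorm20 {X : Type*} [Fintype X] (π : X → ℝ) (K : Matrix X X ℝ) : ℝ :=
  ⨆ f : {f : X → ℝ // (∑ x, π x * f x = 0) ∧ pNorm π f ≤ 1}, pNorm π (K.mulVec f.1)

set_option linter.unusedSectionVars false

section helpers
variable {X G : Type*} [Fintype X] [DecidableEq X] [Group G] [MulAction G X]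

lemma permMat_mul (g g' : G) : permMat (X := X) g * permMat g' = permMat (g' * g) := by
  ext x y
  rw [Matrix.mul_apply]
  simp only [permMat, ite_mul, one_mul, zero_mul, Finset.sum_ite_eq', Finset.mem_univ, if_true,
    mul_smul]

lemma avg_mulVec {ι : Type*} [Fintype ι] (u : ι → G) (f : X → ℝ) :
    (((Fintype.card ι : ℝ)⁻¹ • ∑ i : ι, permMat (u i)) : Matrix X X ℝ).mulVec f
      = fun x => (Fintype.card ι : ℝ)⁻¹ * ∑ i : ι, f (u i • x) := by
  funext x
  simp only [Matrix.mulVec, dotProduct, Matrix.smul_apply, Matrix.sum_apply,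
    permMat, smul_eq_mul, Finset.sum_mul, mul_assoc, ← Finset.mul_sum]
  rw [Finset.sum_comm]
  congr 1
  refine Finset.sum_congr rfl fun i _ => ?_
  simp [ite_mul]

lemma sum_pi_comp (π : X → ℝ) (hπinv : ∀ (g : G) (x : X), π (g • x) = π x)
    (g : G) (f : X → ℝ) : ∑ x, π x * f (g • x) = ∑ x, π x * f x := by
  calc ∑ x, π x * f (g • x) = ∑ x, π (g • x) * f (g • x) := by simp [hπinv]
    _ = ∑ x, π x * f x := Equiv.sum_comp (MulAction.toPerm g) (fun x => π x * f x)

lemma avg_mean {ι : Type*} [Fintype ι] [Nonempty ι] (π : X → ℝ)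
    (hπinv : ∀ (g : G) (x : X), π (g • x) = π x) (u : ι → G) (f : X → ℝ) :
    ∑ x, π x * (((Fintype.card ι : ℝ)⁻¹ • ∑ i : ι, permMat (u i)) : Matrix X X ℝ).mulVec f x
      = ∑ x, π x * f x := by
  rw [avg_mulVec]
  have hn : (0:ℝ) < (Fintype.card ι : ℝ) := by
    exact_mod_cast Fintype.card_pos
  calc ∑ x, π x * ((Fintype.card ι : ℝ)⁻¹ * ∑ i : ι, f (u i • x))
      = (Fintype.card ι : ℝ)⁻¹ * ∑ x, ∑ i : ι, π x * f (u i • x) := by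
        simp only [Finset.mul_sum]
        exact Finset.sum_congr rfl fun x _ => Finset.sum_congr rfl fun i _ => by ring
    _ = (Fintype.card ι : ℝ)⁻¹ * ∑ i : ι, ∑ x, π x * f (u i • x) := by rw [Finset.sum_comm]
    _ = (Fintype.card ι : ℝ)⁻¹ * ∑ i : ι, ∑ x, π x * f x := by
        congr 1; exact Finset.sum_congr rfl fun i _ => sum_pi_comp π hπinv (u i) f
    _ = ∑ x, π x * f x := by
        rw [Finset.sum_const, Finset.card_univ, nsmul_eq_mul, ← mul_assoc,
          inv_mul_cancel₀ hn.ne', one_mul]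

lemma avg_contract {ι : Type*} [Fintype ι] [Nonempty ι] (π : X → ℝ)
    (hπpos : ∀ x, 0 < π x) (hπinv : ∀ (g : G) (x : X), π (g • x) = π x)
    (u : ι → G) (f : X → ℝ) :
    pNorm π ((((Fintype.card ι : ℝ)⁻¹ • ∑ i : ι, permMat (u i)) : Matrix X X ℝ).mulVec f)
      ≤ pNorm π f := by
  rw [avg_mulVec]
  unfold pNorm
  apply Real.sqrt_le_sqrt
  have hn : (0:ℝ) < (Fintype.card ι : ℝ) := by exact_mod_cast Fintype.card_pos
  set c : ℝ := (Fintype.card ι : ℝ)⁻¹ with hc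
  have hcn : c * (Fintype.card ι : ℝ) = 1 := inv_mul_cancel₀ hn.ne'
  calc ∑ x, π x * (c * ∑ i : ι, f (u i • x)) ^ 2
      ≤ ∑ x, c * ∑ i : ι, π x * f (u i • x) ^ 2 := by
        refine Finset.sum_le_sum fun x _ => ?_
        have hS : (∑ i : ι, f (u i • x)) ^ 2
            ≤ (Fintype.card ι : ℝ) * ∑ i : ι, f (u i • x) ^ 2 := by
          have h := Finset.sum_mul_sq_le_sq_mul_sq Finset.univ (fun _ : ι => (1:ℝ))
            (fun i => f (u i • x))
          simpa [Finset.card_univ] using h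
        have h1 : π x * (c * ∑ i : ι, f (u i • x)) ^ 2
            = c * (c * (π x * (∑ i : ι, f (u i • x)) ^ 2)) := by ring
        have h2 : c * ∑ i : ι, π x * f (u i • x) ^ 2
            = c * (c * (π x * ((Fintype.card ι : ℝ) * ∑ i : ι, f (u i • x) ^ 2))) := by
          rw [← Finset.mul_sum,
            show c * (c * (π x * ((Fintype.card ι : ℝ) * ∑ i : ι, f (u i • x) ^ 2)))
              = (c * (Fintype.card ι : ℝ)) * (c * (π x * ∑ i : ι, f (u i • x) ^ 2)) by ring,
            hcn, one_mul]
        rw [h1, h2]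
        have hcnn : (0:ℝ) ≤ c := inv_nonneg.mpr hn.le
        refine mul_le_mul_of_nonneg_left (mul_le_mul_of_nonneg_left ?_ hcnn) hcnn
        exact mul_le_mul_of_nonneg_left hS (hπpos x).le
    _ = c * ∑ i : ι, ∑ x, π x * f (u i • x) ^ 2 := by
        rw [← Finset.mul_sum, Finset.sum_comm]
    _ = c * ∑ i : ι, ∑ x, π x * f x ^ 2 := by
        congr 1
        exact Finset.sum_congr rfl fun i _ => sum_pi_comp π hπinv (u i) (fun x => f x ^ 2)
    _ = ∑ x, π x * f x ^ 2 := by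
        rw [Finset.sum_const, Finset.card_univ, nsmul_eq_mul, ← mul_assoc, hcn, one_mul]

lemma bdd_range (π : X → ℝ) (hπpos : ∀ x, 0 < π x) (K : Matrix X X ℝ) :
    BddAbove (Set.range fun f : {f : X → ℝ // (∑ x, π x * f x = 0) ∧ pNorm π f ≤ 1} =>
      pNorm π (K.mulVec f.1)) := by
  refine ⟨Real.sqrt (∑ x, π x * (∑ y, |K x y| * Real.sqrt (π y)⁻¹) ^ 2), ?_⟩
  rintro v ⟨⟨f, hf0, hf1⟩, rfl⟩
  simp only
  unfold pNorm
  apply Real.sqrt_le_sqrt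
  refine Finset.sum_le_sum fun x _ => ?_
  refine mul_le_mul_of_nonneg_left ?_ (hπpos x).le
  have habs : |K.mulVec f x| ≤ ∑ y, |K x y| * Real.sqrt (π y)⁻¹ := by
    refine (Finset.abs_sum_le_sum_abs _ _).trans ?_
    refine Finset.sum_le_sum fun y _ => ?_
    rw [abs_mul]
    refine mul_le_mul_of_nonneg_left ?_ (abs_nonneg _)
    have hsumnn : (0:ℝ) ≤ ∑ x, π x * f x ^ 2 :=
      Finset.sum_nonneg fun x _ => mul_nonneg (hπpos x).le (sq_nonneg _)
    have hsum1 : ∑ x, π x * f x ^ 2 ≤ 1 := by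
      have h := Real.sq_sqrt hsumnn
      unfold pNorm at hf1
      nlinarith [Real.sqrt_nonneg (∑ x, π x * f x ^ 2)]
    have hy : π y * f y ^ 2 ≤ 1 :=
      le_trans (Finset.single_le_sum
        (fun x _ => mul_nonneg (hπpos x).le (sq_nonneg _)) (Finset.mem_univ y)) hsum1
    have hfy : f y ^ 2 ≤ (π y)⁻¹ := by
      have h2 : π y * (π y)⁻¹ = 1 := mul_inv_cancel₀ (hπpos y).ne'
      nlinarith [hπpos y]
    calc |f y| = Real.sqrt (f y ^ 2) := by rw [Real.sqrt_sq_eq_abs]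
      _ ≤ Real.sqrt (π y)⁻¹ := Real.sqrt_le_sqrt hfy
  calc (K.mulVec f x) ^ 2 = |K.mulVec f x| ^ 2 := (sq_abs _).symm
    _ ≤ (∑ y, |K x y| * Real.sqrt (π y)⁻¹) ^ 2 :=
      pow_le_pow_left₀ (abs_nonneg _) habs 2

end helpers

section groups
variable {X G : Type*} [Fintype X] [DecidableEq X] [Fintype G] [Group G] [MulAction G X]
  (H : Subgroup G) [Fintype H]

lemma QG_mul_QH :
    (((Fintype.card G : ℝ)⁻¹ • ∑ g : G, permMat (X := X) g) *
      ((Fintype.card H : ℝ)⁻¹ • ∑ h : H, permMat ((h : G)))) =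
    ((Fintype.card G : ℝ)⁻¹ • ∑ g : G, permMat (X := X) g) := by
  have hn : (0:ℝ) < (Fintype.card H : ℝ) := by exact_mod_cast Fintype.card_pos
  rw [Matrix.smul_mul, Matrix.mul_smul, smul_smul]
  have hmul : (∑ g : G, permMat (X := X) g) * (∑ h : H, permMat ((h : G)))
      = (Fintype.card H : ℝ) • ∑ g : G, permMat (X := X) g := by
    rw [Finset.sum_mul_sum, Finset.sum_comm]
    have : ∀ h : H, ∑ g : G, permMat (X := X) g * permMat ((h : G))
        = ∑ g : G, permMat (X := X) g := by
      intro h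
      calc ∑ g : G, permMat (X := X) g * permMat ((h : G))
          = ∑ g : G, permMat (X := X) ((h : G) * g) := by
            exact Finset.sum_congr rfl fun g _ => permMat_mul g (h : G)
        _ = ∑ g : G, permMat (X := X) g :=
            Equiv.sum_comp (Equiv.mulLeft (h : G)) (fun g => permMat g)
    rw [Finset.sum_congr rfl fun h _ => this h, Finset.sum_const, Finset.card_univ,
      ← Nat.cast_smul_eq_nsmul ℝ]
  rw [hmul, smul_smul]
  congr 1
  field_simp

lemma QH_mul_QG :
    (((Fintype.card H : ℝ)⁻¹ • ∑ h : H, permMat ((h : G))) *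
      ((Fintype.card G : ℝ)⁻¹ • ∑ g : G, permMat (X := X) g)) =
    ((Fintype.card G : ℝ)⁻¹ • ∑ g : G, permMat (X := X) g) := by
  have hn : (0:ℝ) < (Fintype.card H : ℝ) := by exact_mod_cast Fintype.card_pos
  rw [Matrix.smul_mul, Matrix.mul_smul, smul_smul]
  have hmul : (∑ h : H, permMat ((h : G))) * (∑ g : G, permMat (X := X) g)
      = (Fintype.card H : ℝ) • ∑ g : G, permMat (X := X) g := by
    rw [Finset.sum_mul_sum]
    have : ∀ h : H, ∑ g : G, permMat (X := X) ((h : G)) * permMat g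
        = ∑ g : G, permMat (X := X) g := by
      intro h
      calc ∑ g : G, permMat (X := X) ((h : G)) * permMat g
          = ∑ g : G, permMat (X := X) (g * (h : G)) := by
            exact Finset.sum_congr rfl fun g _ => permMat_mul (h : G) g
        _ = ∑ g : G, permMat (X := X) g :=
            Equiv.sum_comp (Equiv.mulRight (h : G)) (fun g => permMat g)
    rw [Finset.sum_congr rfl fun h _ => this h, Finset.sum_const, Finset.card_univ,
      ← Nat.cast_smul_eq_nsmul ℝ]
  rw [hmul, smul_smul]
  congr 1
  field_simp

end groups

/-- monotonicity of the multiplicative spectral gap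
`γ(K) = 1 - ‖K‖_{L²₀(π)→L²₀(π)}` with respect to group size. For a subgroup `H ≤ G`
acting by restriction, `γ(Q_G P Q_G) ≥ γ(Q_H P Q_H)`, where `Q_G`, `Q_H` are the
uniform averages over `G` and `H` respectively. -/
theorem stmt8 {X G : Type*} [Fintype X] [DecidableEq X] [Fintype G] [Group G] [MulAction G X]
    (H : Subgroup G) [Fintype H]
    (π : X → ℝ) (hπpos : ∀ x, 0 < π x) (hπsum : ∑ x, π x = 1)
    (hπinv : ∀ (g : G) (x : X), π (g • x) = π x)
    (P : Matrix X X ℝ) (hPnn : ∀ x y, 0 ≤ P x y) (hProw : ∀ x, ∑ y, P x y = 1)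
    (hPstat : ∀ y, ∑ x, π x * P x y = π y) :
    1 - opNorm20 π
        (((Fintype.card H : ℝ)⁻¹ • ∑ h : H, permMat (h : G)) * P *
          ((Fintype.card H : ℝ)⁻¹ • ∑ h : H, permMat (h : G))) ≤
    1 - opNorm20 π
        (((Fintype.card G : ℝ)⁻¹ • ∑ g : G, permMat g) * P *
          ((Fintype.card G : ℝ)⁻¹ • ∑ g : G, permMat g)) := by
  set QG : Matrix X X ℝ := (Fintype.card G : ℝ)⁻¹ • ∑ g : G, permMat g with hQG
  set QH : Matrix X X ℝ := (Fintype.card H : ℝ)⁻¹ • ∑ h : H, permMat ((h : G)) with hQH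
  set K : Matrix X X ℝ := QH * P * QH with hK
  have hfact : QG * P * QG = QG * K * QG := by
    rw [hK, show QG * (QH * P * QH) * QG = QG * QH * (P * (QH * QG)) by
      simp only [mul_assoc], QG_mul_QH, QH_mul_QG]
    simp only [mul_assoc]
    rfl
  rw [hfact]
  have hmono : opNorm20 π (QG * K * QG) ≤ opNorm20 π K := by
    unfold opNorm20
    haveI : Nonempty {f : X → ℝ // (∑ x, π x * f x = 0) ∧ pNorm π f ≤ 1} :=
      ⟨⟨0, by simp, by simp [pNorm]⟩⟩
    apply ciSup_le
    rintro ⟨f, hf0, hf1⟩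
    simp only
    set f' : X → ℝ := QG.mulVec f with hf'
    have hf'0 : ∑ x, π x * f' x = 0 := by
      rw [hf', hQG]
      rw [avg_mean (u := fun g : G => g) π hπinv f]
      exact hf0
    have hf'1 : pNorm π f' ≤ 1 := by
      rw [hf', hQG]
      exact le_trans (avg_contract (u := fun g : G => g) π hπpos hπinv f) hf1
    have hsplit : (QG * K * QG).mulVec f = QG.mulVec (K.mulVec f') := by
      rw [hf', Matrix.mulVec_mulVec, Matrix.mulVec_mulVec]
    rw [hsplit]
    calc pNorm π (QG.mulVec (K.mulVec f')) ≤ pNorm π (K.mulVec f') := by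
          rw [hQG]
          exact avg_contract (u := fun g : G => g) π hπpos hπinv (K.mulVec f')
      _ ≤ ⨆ v : {f : X → ℝ // (∑ x, π x * f x = 0) ∧ pNorm π f ≤ 1},
            pNorm π (K.mulVec v.1) :=
          le_ciSup (bdd_range π hπpos K) ⟨f', hf'0, hf'1⟩
  linarith
end

section
/- Let π be a G-invariant full-support probability on a finite set X and P a π-reversible stochastic matrix which is non-negative definite on L²(π) (⟨Pf,f⟩_π ≥ 0 for all f). Then Φ(QPQ) ≥ Φ(P), where Q = (1/|G|)Σ_g U_g and Φ is the Cheeger constant. -/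
open Matrix

/-- The uniform group average `Q = (1/|G|) Σ_{g∈G} U_g`. -/
noncomputable def unifAvg (X G : Type*) [Fintype X] [DecidableEq X] [Fintype G] [Group G]
    [MulAction G X] : Matrix X X ℝ :=
  (Fintype.card G : ℝ)⁻¹ • ∑ g : G, permMat g

/-- Indicator function of a finite set. -/
noncomputable def ind {X : Type*} [DecidableEq X] (A : Finset X) : X → ℝ :=
  fun x => if x ∈ A then 1 else 0

/-- The Dirichlet-type form `⟨(I−K)𝟙_A, 𝟙_A⟩_π`. -/
noncomputable def dForm {X : Type*} [Fintype X] [DecidableEq X] (π : X → ℝ)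
    (K : Matrix X X ℝ) (A : Finset X) : ℝ :=
  ∑ x, π x * (ind A x - K.mulVec (ind A) x) * ind A x

/-- The Cheeger constant `Φ(K) = min_{0 < π(A) ≤ 1/2} ⟨(I−K)𝟙_A,𝟙_A⟩_π / π(A)`. -/
noncomputable def cheeger {X : Type*} [Fintype X] [DecidableEq X] (π : X → ℝ)
    (K : Matrix X X ℝ) : ℝ :=
  ⨅ A : {A : Finset X // 0 < ∑ x ∈ A, π x ∧ ∑ x ∈ A, π x ≤ 1 / 2},
    dForm π K A.1 / ∑ x ∈ A.1, π x

section aux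

set_option linter.unusedSectionVars false

variable {X G : Type*} [Fintype X] [DecidableEq X] [Fintype G] [Group G] [MulAction G X]

/-- the bilinear form `⟨P f, h⟩_π` -/
noncomputable def qf (π : X → ℝ) (P : Matrix X X ℝ) (f h : X → ℝ) : ℝ :=
  ∑ x, π x * P.mulVec f x * h x

lemma qf_eq (π : X → ℝ) (P : Matrix X X ℝ) (f h : X → ℝ) :
    qf π P f h = ∑ x, ∑ y, π x * P x y * f y * h x := by
  unfold qf Matrix.mulVec
  refine Finset.sum_congr rfl fun x _ => ?_
  rw [dotProduct, Finset.mul_sum, Finset.sum_mul]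
  exact Finset.sum_congr rfl fun y _ => by ring

lemma qf_symm (π : X → ℝ) (P : Matrix X X ℝ)
    (hPrev : ∀ x y, π x * P x y = π y * P y x) (f h : X → ℝ) :
    qf π P f h = qf π P h f := by
  rw [qf_eq, qf_eq, Finset.sum_comm]
  refine Finset.sum_congr rfl fun x _ => Finset.sum_congr rfl fun y _ => ?_
  rw [show π y * P y x * f x * h y = (π y * P y x) * (f x * h y) by ring, hPrev,
    show π x * P x y * h y * f x = (π x * P x y) * (f x * h y) by ring]

lemma qf_sub_sub (π : X → ℝ) (P : Matrix X X ℝ) (f h : X → ℝ) :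
    qf π P (f - h) (f - h) = qf π P f f - qf π P f h - qf π P h f + qf π P h h := by
  simp only [qf_eq, Pi.sub_apply, ← Finset.sum_sub_distrib, ← Finset.sum_add_distrib]
  exact Finset.sum_congr rfl fun x _ => Finset.sum_congr rfl fun y _ => by ring

lemma two_qf_le (π : X → ℝ) (P : Matrix X X ℝ)
    (hPrev : ∀ x y, π x * P x y = π y * P y x)
    (hPpsd : ∀ f : X → ℝ, 0 ≤ ∑ x, π x * P.mulVec f x * f x) (f h : X → ℝ) :
    2 * qf π P f h ≤ qf π P f f + qf π P h h := by
  have h0 : 0 ≤ qf π P (f - h) (f - h) := hPpsd _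
  rw [qf_sub_sub, qf_symm π P hPrev h f] at h0
  linarith

lemma sum4_comm {α β : Type*} [Fintype α] [Fintype β] (T : α → α → β → β → ℝ) :
    (∑ x, ∑ y, ∑ g, ∑ g', T x y g g') = ∑ g, ∑ g', ∑ x, ∑ y, T x y g g' := by
  have h1 : (∑ x, ∑ y, ∑ g, ∑ g', T x y g g') = ∑ x, ∑ g, ∑ y, ∑ g', T x y g g' :=
    Finset.sum_congr rfl fun x _ => Finset.sum_comm
  have h2 : (∑ x, ∑ g, ∑ y, ∑ g', T x y g g') = ∑ g, ∑ x, ∑ y, ∑ g', T x y g g' :=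
    Finset.sum_comm
  have h3 : (∑ g, ∑ x, ∑ y, ∑ g', T x y g g') = ∑ g, ∑ x, ∑ g', ∑ y, T x y g g' :=
    Finset.sum_congr rfl fun g _ => Finset.sum_congr rfl fun x _ => Finset.sum_comm
  have h4 : (∑ g, ∑ x, ∑ g', ∑ y, T x y g g') = ∑ g, ∑ g', ∑ x, ∑ y, T x y g g' :=
    Finset.sum_congr rfl fun g _ => Finset.sum_comm
  rw [h1, h2, h3, h4]

lemma qf_sum_sum (π : X → ℝ) (P : Matrix X X ℝ) (f : G → X → ℝ) :
    qf π P (∑ g, f g) (∑ g, f g) = ∑ g : G, ∑ g' : G, qf π P (f g) (f g') := by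
  simp only [qf_eq, Finset.sum_apply, Finset.mul_sum, Finset.sum_mul]
  rw [sum4_comm fun x y a b => π x * P x y * f b y * f a x]
  exact Finset.sum_comm

lemma qf_jensen (π : X → ℝ) (P : Matrix X X ℝ)
    (hPrev : ∀ x y, π x * P x y = π y * P y x)
    (hPpsd : ∀ f : X → ℝ, 0 ≤ ∑ x, π x * P.mulVec f x * f x) (f : G → X → ℝ) :
    qf π P (∑ g, f g) (∑ g, f g) ≤ (Fintype.card G : ℝ) * ∑ g : G, qf π P (f g) (f g) := by
  rw [qf_sum_sum]
  calc ∑ g : G, ∑ g' : G, qf π P (f g) (f g')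
      ≤ ∑ g : G, ∑ g' : G, (qf π P (f g) (f g) + qf π P (f g') (f g')) / 2 := by
        refine Finset.sum_le_sum fun g _ => Finset.sum_le_sum fun g' _ => ?_
        have := two_qf_le π P hPrev hPpsd (f g) (f g')
        linarith
    _ = ((∑ g : G, ∑ _g' : G, qf π P (f g) (f g))
          + ∑ _g : G, ∑ g' : G, qf π P (f g') (f g')) / 2 := by
        simp only [add_div, Finset.sum_add_distrib, Finset.sum_div]
    _ = (Fintype.card G : ℝ) * ∑ g : G, qf π P (f g) (f g) := by
        simp only [Finset.sum_const, Finset.card_univ, nsmul_eq_mul, ← Finset.mul_sum]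
        ring

lemma qf_smul (π : X → ℝ) (P : Matrix X X ℝ) (c : ℝ) (f h : X → ℝ) :
    qf π P (fun x => c * f x) (fun x => c * h x) = c * c * qf π P f h := by
  rw [qf_eq, qf_eq, Finset.mul_sum]
  refine Finset.sum_congr rfl fun x _ => ?_
  rw [Finset.mul_sum]
  exact Finset.sum_congr rfl fun y _ => by ring

lemma unifAvg_mulVec (v : X → ℝ) (x : X) :
    (unifAvg X G).mulVec v x = (Fintype.card G : ℝ)⁻¹ * ∑ g : G, v (g • x) := by
  rw [unifAvg, Matrix.smul_mulVec]
  simp only [Pi.smul_apply, smul_eq_mul]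
  congr 1
  simp only [Matrix.mulVec, dotProduct, Matrix.sum_apply, permMat, Finset.sum_mul, ite_mul,
    one_mul, zero_mul]
  rw [Finset.sum_comm]
  simp

lemma q_adjoint (π : X → ℝ) (hπinv : ∀ (g : G) (x : X), π (g • x) = π x) (v h : X → ℝ) :
    ∑ x, π x * (unifAvg X G).mulVec v x * h x
      = ∑ x, π x * v x * (unifAvg X G).mulVec h x := by
  simp only [unifAvg_mulVec]
  have pull : ∀ (F : X → G → ℝ), (∑ x, (Fintype.card G : ℝ)⁻¹ * ∑ g : G, F x g)
      = (Fintype.card G : ℝ)⁻¹ * ∑ g : G, ∑ x, F x g := by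
    intro F
    rw [← Finset.mul_sum]
    congr 1
    exact Finset.sum_comm
  have lhs_eq : ∑ x, π x * ((Fintype.card G : ℝ)⁻¹ * ∑ g : G, v (g • x)) * h x
      = (Fintype.card G : ℝ)⁻¹ * ∑ g : G, ∑ x, π x * v (g • x) * h x := by
    rw [← pull fun x g => π x * v (g • x) * h x]
    refine Finset.sum_congr rfl fun x _ => ?_
    simp only [Finset.mul_sum, Finset.sum_mul]
    exact Finset.sum_congr rfl fun g _ => by ring
  have rhs_eq : ∑ x, π x * v x * ((Fintype.card G : ℝ)⁻¹ * ∑ g : G, h (g • x))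
      = (Fintype.card G : ℝ)⁻¹ * ∑ g : G, ∑ x, π x * v x * h (g • x) := by
    rw [← pull fun x g => π x * v x * h (g • x)]
    refine Finset.sum_congr rfl fun x _ => ?_
    simp only [Finset.mul_sum, Finset.sum_mul]
    exact Finset.sum_congr rfl fun g _ => by ring
  rw [lhs_eq, rhs_eq]
  congr 1
  refine Fintype.sum_equiv (Equiv.inv G) _ _ fun g => ?_
  -- ∑ x, π x * v ((Equiv.inv G g) • x) * h x  vs  ∑ x, π x * v x * h (g • x) ?
  refine Fintype.sum_equiv (MulAction.toPerm g) _ _ fun x => ?_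
  simp [MulAction.toPerm, hπinv, smul_smul]

lemma ind_image (g : G) (A : Finset X) (x : X) :
    ind (A.image fun a => g⁻¹ • a) x = ind A (g • x) := by
  have hmem : (x ∈ A.image fun a => g⁻¹ • a) ↔ g • x ∈ A := by
    simp only [Finset.mem_image]
    constructor
    · rintro ⟨a, ha, rfl⟩; simpa [smul_smul] using ha
    · intro hx; exact ⟨g • x, hx, by simp⟩
  simp [ind, hmem]

lemma sum_pi_ind (π : X → ℝ) (A : Finset X) :
    ∑ x, π x * ind A x * ind A x = ∑ x ∈ A, π x := by
  simp [ind, mul_ite, ite_mul, mul_one, mul_zero, zero_mul, Finset.sum_ite_mem]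

lemma dForm_eq (π : X → ℝ) (K : Matrix X X ℝ) (A : Finset X) :
    dForm π K A = (∑ x ∈ A, π x) - qf π K (ind A) (ind A) := by
  unfold dForm qf
  rw [← sum_pi_ind π A, ← Finset.sum_sub_distrib]
  exact Finset.sum_congr rfl fun x _ => by ring

lemma dForm_nonneg (π : X → ℝ) (hπpos : ∀ x, 0 < π x) (K : Matrix X X ℝ)
    (hKnn : ∀ x y, 0 ≤ K x y) (hKrow : ∀ x, ∑ y, K x y = 1) (A : Finset X) :
    0 ≤ dForm π K A := by
  rw [dForm_eq, sub_nonneg]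
  have hKv : ∀ x, K.mulVec (ind A) x ≤ 1 := by
    intro x
    rw [Matrix.mulVec, dotProduct, ← hKrow x]
    refine Finset.sum_le_sum fun y _ => ?_
    unfold ind
    split <;> simp [hKnn]
  rw [← sum_pi_ind π A]
  unfold qf
  refine Finset.sum_le_sum fun x _ => ?_
  by_cases hx : x ∈ A
  · simp only [ind, if_pos hx, mul_one]
    exact mul_le_of_le_one_right (le_of_lt (hπpos x)) (hKv x)
  · simp [ind, if_neg hx]

end aux

/-- for `π`-reversible non-negative-definite `P` and `G`-invariant `π`,
`Φ(QPQ) ≥ Φ(P)`. -/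
theorem stmt11 {X G : Type*} [Fintype X] [DecidableEq X] [Fintype G] [Group G] [MulAction G X]
    (π : X → ℝ) (hπpos : ∀ x, 0 < π x) (hπsum : ∑ x, π x = 1)
    (hπinv : ∀ (g : G) (x : X), π (g • x) = π x)
    (P : Matrix X X ℝ) (hPnn : ∀ x y, 0 ≤ P x y) (hProw : ∀ x, ∑ y, P x y = 1)
    (hPrev : ∀ x y, π x * P x y = π y * P y x)
    (hPpsd : ∀ f : X → ℝ, 0 ≤ ∑ x, π x * P.mulVec f x * f x) :
    cheeger π P ≤ cheeger π (unifAvg X G * P * unifAvg X G) := by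
  by_cases hne : Nonempty {A : Finset X // 0 < ∑ x ∈ A, π x ∧ ∑ x ∈ A, π x ≤ 1 / 2}
  · haveI := hne
    set n : ℝ := (Fintype.card G : ℝ) with hn
    have hnpos : 0 < n := by rw [hn]; exact_mod_cast (Fintype.card_pos : 0 < Fintype.card G)
    have hbdd : BddBelow (Set.range fun B : {A : Finset X // 0 < ∑ x ∈ A, π x ∧
        ∑ x ∈ A, π x ≤ 1 / 2} => dForm π P B.1 / ∑ x ∈ B.1, π x) := by
      refine ⟨0, ?_⟩
      rintro r ⟨B, rfl⟩
      exact div_nonneg (dForm_nonneg π hπpos P hPnn hProw B.1) (le_of_lt B.2.1)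
    rw [cheeger, cheeger]
    refine le_ciInf fun A => ?_
    obtain ⟨A, hA1, hA2⟩ := A
    simp only
    rw [le_div_iff₀ hA1]
    -- notation
    set Φ : ℝ := ⨅ B : {A : Finset X // 0 < ∑ x ∈ A, π x ∧ ∑ x ∈ A, π x ≤ 1 / 2},
      dForm π P B.1 / ∑ x ∈ B.1, π x with hΦ
    set Ag : G → Finset X := fun g => A.image fun a => g⁻¹ • a with hAg
    have hsumAg : ∀ g : G, ∑ x ∈ Ag g, π x = ∑ x ∈ A, π x := by
      intro g
      rw [hAg]
      rw [Finset.sum_image (fun a _ b _ h => by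
        have := congrArg (fun z => g • z) h
        simpa [smul_smul] using this)]
      exact Finset.sum_congr rfl fun a _ => hπinv g⁻¹ a
    have hkey : ∀ g : G, Φ * ∑ x ∈ A, π x ≤ dForm π P (Ag g) := by
      intro g
      have hmem : 0 < ∑ x ∈ Ag g, π x ∧ ∑ x ∈ Ag g, π x ≤ 1 / 2 := by
        rw [hsumAg g]; exact ⟨hA1, hA2⟩
      have := ciInf_le hbdd (⟨Ag g, hmem⟩ : {A : Finset X // 0 < ∑ x ∈ A, π x ∧
        ∑ x ∈ A, π x ≤ 1 / 2})
      rw [← hΦ] at this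
      simp only at this
      rw [le_div_iff₀ (by rw [hsumAg g]; exact hA1), hsumAg g] at this
      exact this
    -- compute dForm of QPQ
    set u : X → ℝ := (unifAvg X G).mulVec (ind A) with hu
    have hqfQPQ : qf π (unifAvg X G * P * unifAvg X G) (ind A) (ind A) = qf π P u u := by
      unfold qf
      have h1 : (unifAvg X G * P * unifAvg X G).mulVec (ind A)
          = (unifAvg X G).mulVec (P.mulVec u) := by
        rw [hu, Matrix.mulVec_mulVec, Matrix.mulVec_mulVec]
      rw [h1, q_adjoint π hπinv (P.mulVec u) (ind A), ← hu]
    have hu_eq : u = fun x => n⁻¹ * (∑ g : G, ind (Ag g)) x := by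
      funext x
      rw [hu, unifAvg_mulVec]
      congr 1
      rw [Finset.sum_apply]
      exact (Finset.sum_congr rfl fun g _ => ind_image g A x).symm
    have hjensen : qf π P u u ≤ n⁻¹ * ∑ g : G, qf π P (ind (Ag g)) (ind (Ag g)) := by
      rw [hu_eq]
      have := qf_smul π P n⁻¹ (∑ g : G, ind (Ag g)) (∑ g : G, ind (Ag g))
      calc qf π P (fun x => n⁻¹ * (∑ g : G, ind (Ag g)) x)
              (fun x => n⁻¹ * (∑ g : G, ind (Ag g)) x)
          = n⁻¹ * n⁻¹ * qf π P (∑ g : G, ind (Ag g)) (∑ g : G, ind (Ag g)) := this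
        _ ≤ n⁻¹ * n⁻¹ * (n * ∑ g : G, qf π P (ind (Ag g)) (ind (Ag g))) := by
            have hj := qf_jensen π P hPrev hPpsd (fun g : G => ind (Ag g))
            have hnn : (0:ℝ) ≤ n⁻¹ * n⁻¹ := by positivity
            exact mul_le_mul_of_nonneg_left hj hnn
        _ = n⁻¹ * ∑ g : G, qf π P (ind (Ag g)) (ind (Ag g)) := by
            field_simp
    have hdQPQ : n⁻¹ * ∑ g : G, dForm π P (Ag g)
        ≤ dForm π (unifAvg X G * P * unifAvg X G) A := by
      rw [dForm_eq, hqfQPQ]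
      have hexp : ∀ g : G, dForm π P (Ag g)
          = (∑ x ∈ A, π x) - qf π P (ind (Ag g)) (ind (Ag g)) := by
        intro g; rw [dForm_eq, hsumAg g]
      calc n⁻¹ * ∑ g : G, dForm π P (Ag g)
          = n⁻¹ * ∑ g : G, ((∑ x ∈ A, π x) - qf π P (ind (Ag g)) (ind (Ag g))) := by
            rw [Finset.sum_congr rfl fun g _ => hexp g]
        _ = (∑ x ∈ A, π x) - n⁻¹ * ∑ g : G, qf π P (ind (Ag g)) (ind (Ag g)) := by
            rw [Finset.sum_sub_distrib, Finset.sum_const, Finset.card_univ, nsmul_eq_mul]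
            rw [mul_sub]
            congr 1
            rw [← mul_assoc, inv_mul_cancel₀ (ne_of_gt hnpos), one_mul]
        _ ≤ (∑ x ∈ A, π x) - qf π P u u := by linarith [hjensen]
    calc Φ * ∑ x ∈ A, π x
        = n⁻¹ * ∑ _g : G, Φ * ∑ x ∈ A, π x := by
          rw [Finset.sum_const, Finset.card_univ, nsmul_eq_mul, ← mul_assoc,
            inv_mul_cancel₀ (ne_of_gt hnpos), one_mul]
      _ ≤ n⁻¹ * ∑ g : G, dForm π P (Ag g) := by
          refine mul_le_mul_of_nonneg_left (Finset.sum_le_sum fun g _ => hkey g) ?_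
          positivity
      _ ≤ dForm π (unifAvg X G * P * unifAvg X G) A := hdQPQ
  · haveI : IsEmpty {A : Finset X // 0 < ∑ x ∈ A, π x ∧ ∑ x ∈ A, π x ≤ 1 / 2} :=
      not_nonempty_iff.mp hne
    rw [cheeger, cheeger, Real.iInf_of_isEmpty, Real.iInf_of_isEmpty]
end

section
/- Let π be a G-invariant full-support probability on finite X, P, M stochastic matrices with M G-invariant under ν (M = Σ ν(g,h) U_g M U_h) and P_da := Σ ν(g,h) U_g P U_h also ν-invariant. Assume all transition probabilities of M are positive. Then the π-weighted KL divergence satisfies the Pythagorean identity D^π_KL(P‖M) = D^π_KL(P‖P_da) + D^π_KL(P_da‖M), provided the group action preserves counting measure (permutations). -/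
open Matrix

/-- `π`-weighted Kullback–Leibler divergence of `A` from `B`
(with the convention `0 · log(0/a) = 0`, which holds since `Real.log 0 = 0`). -/
noncomputable def klDiv {X : Type*} [Fintype X] (π : X → ℝ) (A B : Matrix X X ℝ) : ℝ :=
  ∑ x, ∑ y, π x * A x y * Real.log (A x y / B x y)

set_option linter.unusedSectionVars false
set_option linter.unusedVariables false

section Aux

variable {X G : Type*} [Fintype X] [DecidableEq X] [Fintype G] [Group G] [MulAction G X]

lemma permMat_mul_apply (g : G) (A : Matrix X X ℝ) (x y : X) :
    ((permMat g * A : Matrix X X ℝ) x y) = A (g • x) y := by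
  rw [Matrix.mul_apply]
  simp [permMat]

lemma mul_permMat_apply (h : G) (A : Matrix X X ℝ) (x y : X) :
    ((A * permMat h : Matrix X X ℝ) x y) = A x (h⁻¹ • y) := by
  rw [Matrix.mul_apply]
  rw [Finset.sum_eq_single (h⁻¹ • y)]
  · simp [permMat]
  · intro b _ hb
    rw [permMat, if_neg, mul_zero]
    intro hh; apply hb; rw [hh]; simp
  · simp

lemma doubleAvg_apply (ν : G × G → ℝ) (A : Matrix X X ℝ) (x y : X) :
    doubleAvg ν A x y = ∑ p : G × G, ν p * A (p.1 • x) (p.2⁻¹ • y) := by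
  unfold doubleAvg
  rw [Matrix.sum_apply]
  refine Finset.sum_congr rfl fun p _ => ?_
  rw [Matrix.smul_apply, mul_permMat_apply, permMat_mul_apply, smul_eq_mul]

/-- reindexing a double sum by the action of `g` on rows and `h⁻¹` on columns -/
lemma sum_reindex (g h : G) (f : X → X → ℝ) :
    ∑ x, ∑ y, f (g • x) (h⁻¹ • y) = ∑ x, ∑ y, f x y := by
  rw [← Equiv.sum_comp (MulAction.toPerm g) (fun x => ∑ y, f x y)]
  refine Finset.sum_congr rfl fun x _ => ?_
  rw [← Equiv.sum_comp (MulAction.toPerm h⁻¹) (fun y => f (MulAction.toPerm g x) y)]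
  rfl

lemma sum_swap3 {a b c : Type*} [Fintype a] [Fintype b] [Fintype c] (f : a -> b -> c -> Real) :
    (∑ p : a, ∑ x : b, ∑ y : c, f p x y) = ∑ x : b, ∑ y : c, ∑ p : a, f p x y := by
  rw [Finset.sum_comm]
  exact Finset.sum_congr rfl fun x _ => Finset.sum_comm

/-- a fixed point of the double-averaging is pointwise invariant on the support of ν -/
lemma fixed_invariant (ν : G × G → ℝ) (hνnn : ∀ p, 0 ≤ ν p) (hνsum : ∑ p : G × G, ν p = 1)
    (A : Matrix X X ℝ) (hA : doubleAvg ν A = A) :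
    ∀ p : G × G, 0 < ν p → ∀ x y, A (p.1 • x) (p.2⁻¹ • y) = A x y := by
  set B : G × G → X → X → ℝ := fun p x y => A (p.1 • x) (p.2⁻¹ • y) with hB
  have hentry : ∀ x y, ∑ p : G × G, ν p * B p x y = A x y := by
    intro x y
    rw [← doubleAvg_apply]
    rw [hA]
  have hT : ∀ p : G × G, ∑ x, ∑ y, (B p x y)^2 = ∑ x, ∑ y, (A x y)^2 := by
    intro p
    exact sum_reindex p.1 p.2 (fun x y => (A x y)^2)
  -- pointwise expansion
  have expand : ∀ x y, ∑ p : G × G, ν p * (B p x y - A x y)^2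
      = (∑ p : G × G, ν p * (B p x y)^2) - (A x y)^2 := by
    intro x y
    have h1 := hentry x y
    calc ∑ p : G × G, ν p * (B p x y - A x y)^2
        = ∑ p : G × G, (ν p * (B p x y)^2 - 2 * A x y * (ν p * B p x y) + (A x y)^2 * ν p) := by
          refine Finset.sum_congr rfl fun p _ => ?_; ring
      _ = (∑ p : G × G, ν p * (B p x y)^2) - 2 * A x y * (∑ p : G × G, ν p * B p x y)
            + (A x y)^2 * (∑ p : G × G, ν p) := by
          rw [Finset.sum_add_distrib, Finset.sum_sub_distrib, ← Finset.mul_sum, ← Finset.mul_sum]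
      _ = (∑ p : G × G, ν p * (B p x y)^2) - (A x y)^2 := by rw [h1, hνsum]; ring
  -- total variance is zero
  have total : ∑ p : G × G, ν p * (∑ x, ∑ y, (B p x y - A x y)^2) = 0 := by
    have swap : ∑ p : G × G, ν p * (∑ x, ∑ y, (B p x y - A x y)^2)
        = ∑ x, ∑ y, ∑ p : G × G, ν p * (B p x y - A x y)^2 := by
      simp only [Finset.mul_sum]
      exact sum_swap3 _
    rw [swap]
    have : ∑ x, ∑ y, ((∑ p : G × G, ν p * (B p x y)^2) - (A x y)^2)
        = (∑ p : G × G, ν p * (∑ x, ∑ y, (B p x y)^2)) - ∑ x, ∑ y, (A x y)^2 := by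
      simp only [Finset.sum_sub_distrib]
      congr 1
      simp only [Finset.mul_sum]
      exact (sum_swap3 _).symm
    simp only [expand]
    rw [this]
    have h2 : ∑ p : G × G, ν p * (∑ x, ∑ y, (B p x y)^2) = ∑ x, ∑ y, (A x y)^2 := by
      calc ∑ p : G × G, ν p * (∑ x, ∑ y, (B p x y)^2)
          = ∑ p : G × G, ν p * (∑ x, ∑ y, (A x y)^2) := by
            exact Finset.sum_congr rfl fun p _ => by rw [hT p]
        _ = (∑ p : G × G, ν p) * (∑ x, ∑ y, (A x y)^2) := by rw [← Finset.sum_mul]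
        _ = ∑ x, ∑ y, (A x y)^2 := by rw [hνsum, one_mul]
    rw [h2, sub_self]
  -- extract pointwise equality
  intro p hp x y
  have hnn : ∀ q ∈ (Finset.univ : Finset (G × G)),
      0 ≤ ν q * (∑ x, ∑ y, (B q x y - A x y)^2) := by
    intro q _
    refine mul_nonneg (hνnn q) ?_
    refine Finset.sum_nonneg fun a _ => Finset.sum_nonneg fun b _ => sq_nonneg _
  have hz := (Finset.sum_eq_zero_iff_of_nonneg hnn).mp total p (Finset.mem_univ p)
  have hsz : (∑ x, ∑ y, (B p x y - A x y)^2) = 0 := by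
    rcases mul_eq_zero.mp hz with h | h
    · exact absurd h (ne_of_gt hp)
    · exact h
  have hnn2 : ∀ a ∈ (Finset.univ : Finset X), 0 ≤ ∑ y, (B p a y - A a y)^2 :=
    fun a _ => Finset.sum_nonneg fun b _ => sq_nonneg _
  have hx := (Finset.sum_eq_zero_iff_of_nonneg hnn2).mp hsz x (Finset.mem_univ x)
  have hnn3 : ∀ b ∈ (Finset.univ : Finset X), 0 ≤ (B p x b - A x b)^2 :=
    fun b _ => sq_nonneg _
  have hy := (Finset.sum_eq_zero_iff_of_nonneg hnn3).mp hx y (Finset.mem_univ y)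
  have := pow_eq_zero_iff (n := 2) (by norm_num) |>.mp hy
  have : B p x y = A x y := by linarith [sub_eq_zero.mp this]
  exact this

lemma Q_zero_imp_P_zero (ν : G × G → ℝ) (hνnn : ∀ p, 0 ≤ ν p) (hνsum : ∑ p : G × G, ν p = 1)
    (P : Matrix X X ℝ) (hPnn : ∀ x y, 0 ≤ P x y)
    (hPdainv : doubleAvg ν (doubleAvg ν P) = doubleAvg ν P)
    {x y : X} (hq : doubleAvg ν P x y = 0) : P x y = 0 := by
  -- pick p with ν p > 0
  obtain ⟨p, _, hp⟩ : ∃ p ∈ (Finset.univ : Finset (G × G)), 0 < ν p := by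
    by_contra hc
    push_neg at hc
    have : ∑ p : G × G, ν p = 0 := Finset.sum_eq_zero fun q hq =>
      le_antisymm (hc q hq) (hνnn q)
    rw [hνsum] at this; norm_num at this
  have hinv := fixed_invariant ν hνnn hνsum (doubleAvg ν P) hPdainv p hp
  -- Q (p.1⁻¹ • x) (p.2 • y) = Q x y = 0
  have h0 : doubleAvg ν P (p.1⁻¹ • x) (p.2 • y) = 0 := by
    have := hinv (p.1⁻¹ • x) (p.2 • y)
    simp only [smul_inv_smul, inv_smul_smul] at this
    rw [← this]
    exact hq
  rw [doubleAvg_apply] at h0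
  have hterm : ν p * P (p.1 • p.1⁻¹ • x) (p.2⁻¹ • p.2 • y) = 0 := by
    have hnn : ∀ q ∈ (Finset.univ : Finset (G × G)),
        0 ≤ ν q * P (q.1 • p.1⁻¹ • x) (q.2⁻¹ • p.2 • y) :=
      fun q _ => mul_nonneg (hνnn q) (hPnn _ _)
    exact (Finset.sum_eq_zero_iff_of_nonneg hnn).mp h0 p (Finset.mem_univ p)
  simp only [smul_inv_smul, inv_smul_smul] at hterm
  rcases mul_eq_zero.mp hterm with h | h
  · exact absurd h (ne_of_gt hp)
  · exact h

/-- key second identity: D(Q‖M) written with P in the linear slot -/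
lemma klDiv_Q_M (π : X → ℝ) (hπinv : ∀ (g : G) (x : X), π (g • x) = π x)
    (ν : G × G → ℝ) (hνnn : ∀ p, 0 ≤ ν p) (hνsum : ∑ p : G × G, ν p = 1)
    (P M : Matrix X X ℝ)
    (hMinv : doubleAvg ν M = M)
    (hPdainv : doubleAvg ν (doubleAvg ν P) = doubleAvg ν P) :
    klDiv π (doubleAvg ν P) M
      = ∑ x, ∑ y, π x * P x y * Real.log (doubleAvg ν P x y / M x y) := by
  set Q := doubleAvg ν P with hQ
  set f : X → X → ℝ := fun x y => Real.log (Q x y / M x y) with hf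
  have hMi := fixed_invariant ν hνnn hνsum M hMinv
  have hQi := fixed_invariant ν hνnn hνsum Q hPdainv
  have step1 : klDiv π Q M = ∑ p : G × G, ν p * ∑ x, ∑ y, π x * P (p.1 • x) (p.2⁻¹ • y) * f x y := by
    unfold klDiv
    have : ∀ x y, π x * Q x y * f x y = ∑ p : G × G, ν p * (π x * P (p.1 • x) (p.2⁻¹ • y) * f x y) := by
      intro x y
      rw [hQ, doubleAvg_apply, Finset.mul_sum, Finset.sum_mul]
      exact Finset.sum_congr rfl fun p _ => by ring
    refine (Finset.sum_congr rfl fun x _ => Finset.sum_congr rfl fun y _ => this x y).trans ?_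
    rw [← sum_swap3 (fun p x y => ν p * (π x * P (p.1 • x) (p.2⁻¹ • y) * f x y))]
    refine Finset.sum_congr rfl fun p _ => ?_
    simp only [Finset.mul_sum]
  rw [step1]
  have step2 : ∀ p : G × G, ν p * ∑ x, ∑ y, π x * P (p.1 • x) (p.2⁻¹ • y) * f x y
      = ν p * ∑ x, ∑ y, π x * P x y * f x y := by
    intro p
    rcases eq_or_lt_of_le (hνnn p) with h | h
    · rw [← h]; ring
    congr 1
    have hre := sum_reindex p.1 p.2 (fun x y => π (p.1⁻¹ • x) * P x y * f (p.1⁻¹ • x) (p.2 • y))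
    simp only [inv_smul_smul, smul_inv_smul] at hre
    rw [hre]
    refine Finset.sum_congr rfl fun x _ => Finset.sum_congr rfl fun y _ => ?_
    have hqeq : Q (p.1⁻¹ • x) (p.2 • y) = Q x y := by
      have := hQi p h (p.1⁻¹ • x) (p.2 • y)
      simp only [smul_inv_smul, inv_smul_smul] at this
      exact this.symm
    have hmeq : M (p.1⁻¹ • x) (p.2 • y) = M x y := by
      have := hMi p h (p.1⁻¹ • x) (p.2 • y)
      simp only [smul_inv_smul, inv_smul_smul] at this
      exact this.symm
    simp only [hf]
    rw [hqeq, hmeq, hπinv p.1⁻¹ x]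
  simp only [step2]
  rw [← Finset.sum_mul, hνsum, one_mul]

end Aux

/-- Pythagorean identity for the `π`-weighted KL divergence: if `M` has
positive entries and both `M` and `P_da` are fixed by the `ν`-double-averaging, then
`D^π_KL(P‖M) = D^π_KL(P‖P_da) + D^π_KL(P_da‖M)`. -/
theorem stmt12 {X G : Type*} [Fintype X] [DecidableEq X] [Fintype G] [Group G] [MulAction G X]
    (π : X → ℝ) (hπpos : ∀ x, 0 < π x) (hπsum : ∑ x, π x = 1)
    (hπinv : ∀ (g : G) (x : X), π (g • x) = π x)
    (P : Matrix X X ℝ) (hPnn : ∀ x y, 0 ≤ P x y) (hProw : ∀ x, ∑ y, P x y = 1)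
    (M : Matrix X X ℝ) (hMpos : ∀ x y, 0 < M x y) (hMrow : ∀ x, ∑ y, M x y = 1)
    (ν : G × G → ℝ) (hνnn : ∀ p, 0 ≤ ν p) (hνsum : ∑ p : G × G, ν p = 1)
    (hMinv : doubleAvg ν M = M)
    (hPdainv : doubleAvg ν (doubleAvg ν P) = doubleAvg ν P) :
    klDiv π P M = klDiv π P (doubleAvg ν P) + klDiv π (doubleAvg ν P) M := by
  rw [klDiv_Q_M π hπinv ν hνnn hνsum P M hMinv hPdainv]
  unfold klDiv
  rw [← Finset.sum_add_distrib]
  refine Finset.sum_congr rfl fun x _ => ?_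
  rw [← Finset.sum_add_distrib]
  refine Finset.sum_congr rfl fun y _ => ?_
  by_cases hp : P x y = 0
  · simp [hp]
  · have hq : doubleAvg ν P x y ≠ 0 :=
      fun h => hp (Q_zero_imp_P_zero ν hνnn hνsum P hPnn hPdainv h)
    have hm : M x y ≠ 0 := (hMpos x y).ne'
    rw [Real.log_div hp hm, Real.log_div hp hq, Real.log_div hq hm]
    ring
end

section
/- Let G be a finite group acting on a finite set X with G-invariant full-support π; let P be any real X×X matrix, ν a probability on G×G with ν(g,h) = ν(g^{-1},h^{-1}), and suppose M and P_da := Σ ν(g,h) U_g P U_h both satisfy K = Σ ν(g,h) U_g K U_h. Then the Frobenius-norm Pythagorean identity holds: ‖P−M‖_F² = ‖P−P_da‖_F² + ‖P_da−M‖_F². -/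
open Matrix

/-- Squared Frobenius norm `‖A‖_F² = Σ_{x,y} A(x,y)²`. -/
noncomputable def frobSq {X : Type*} [Fintype X] (A : Matrix X X ℝ) : ℝ :=
  ∑ x, ∑ y, A x y ^ 2

noncomputable def innerM {X : Type*} [Fintype X] (A B : Matrix X X ℝ) : ℝ :=
  Matrix.trace (Aᵀ * B)

lemma innerM_apply {X : Type*} [Fintype X] (A B : Matrix X X ℝ) :
    innerM A B = ∑ x, ∑ y, A x y * B x y := by
  unfold innerM
  rw [Matrix.trace, Finset.sum_comm]
  refine Finset.sum_congr rfl fun x _ => ?_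
  simp [Matrix.mul_apply, Matrix.diag, Matrix.transpose_apply]

lemma permMat_conj_apply {X G : Type*} [Fintype X] [DecidableEq X] [Group G] [MulAction G X]
    (g h : G) (C : Matrix X X ℝ) (x y : X) :
    (permMat g * C * permMat h : Matrix X X ℝ) x y = C (g • x) (h⁻¹ • y) := by
  have h1 : ∀ b : X, y = h • b ↔ b = h⁻¹ • y := by
    intro b; constructor
    · intro e; rw [e]; simp
    · intro e; rw [e]; simp
  rw [Matrix.mul_apply]
  simp only [Matrix.mul_apply, permMat, ite_mul, mul_ite, one_mul, mul_one, zero_mul, mul_zero, h1]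
  simp [Finset.sum_ite_eq, Finset.sum_ite_eq']

lemma innerM_doubleAvg_swap {X G : Type*} [Fintype X] [DecidableEq X] [Fintype G] [Group G]
    [MulAction G X] (ν : G × G → ℝ) (hνsymm : ∀ p : G × G, ν p = ν (p.1⁻¹, p.2⁻¹))
    (C D : Matrix X X ℝ) : innerM (doubleAvg ν C) D = innerM C (doubleAvg ν D) := by
  have key : ∀ p : G × G,
      innerM (permMat p.1 * C * permMat p.2) D
        = innerM C (permMat p.1⁻¹ * D * permMat p.2⁻¹) := by
    rintro ⟨g, h⟩
    rw [innerM_apply, innerM_apply]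
    simp only [permMat_conj_apply, inv_inv]
    apply Fintype.sum_equiv (MulAction.toPerm g : Equiv.Perm X)
    intro x
    apply Fintype.sum_equiv (MulAction.toPerm h⁻¹ : Equiv.Perm X)
    intro y
    simp [smul_smul]
  have expand : ∀ (A B : Matrix X X ℝ) (μ : G × G → ℝ),
      innerM (doubleAvg μ A) B = ∑ p : G × G, μ p * innerM (permMat p.1 * A * permMat p.2) B := by
    intro A B μ
    unfold innerM doubleAvg
    simp [Matrix.transpose_sum, Matrix.sum_mul, Matrix.trace_sum, Matrix.transpose_smul,
      Matrix.smul_mul, Matrix.trace_smul, smul_eq_mul]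
  have expand' : ∀ (A B : Matrix X X ℝ) (μ : G × G → ℝ),
      innerM A (doubleAvg μ B) = ∑ p : G × G, μ p * innerM A (permMat p.1 * B * permMat p.2) := by
    intro A B μ
    unfold innerM doubleAvg
    simp [Matrix.mul_sum, Matrix.trace_sum, Matrix.mul_smul, Matrix.trace_smul, smul_eq_mul]
  rw [expand, expand']
  apply Fintype.sum_equiv (Equiv.prodCongr (Equiv.inv G) (Equiv.inv G))
  intro p
  simp only [Equiv.prodCongr_apply, Equiv.inv_apply, Prod.map]
  rw [key p, ← hνsymm]

lemma doubleAvg_sub {X G : Type*} [Fintype X] [DecidableEq X] [Fintype G] [Group G]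
    [MulAction G X] (ν : G × G → ℝ) (A B : Matrix X X ℝ) :
    doubleAvg ν (A - B) = doubleAvg ν A - doubleAvg ν B := by
  unfold doubleAvg
  rw [← Finset.sum_sub_distrib]
  refine Finset.sum_congr rfl fun p _ => ?_
  rw [← smul_sub]
  congr 1
  noncomm_ring

/-- Pythagorean identity under the squared Frobenius norm:
if `ν(g,h) = ν(g⁻¹,h⁻¹)` and both `M` and `P_da` are fixed by the `ν`-averaging, then
`‖P−M‖_F² = ‖P−P_da‖_F² + ‖P_da−M‖_F²`, for `π` `G`-invariant with full support. -/
theorem stmt14 {X G : Type*} [Fintype X] [DecidableEq X] [Fintype G] [Group G] [MulAction G X]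
    (π : X → ℝ) (hπpos : ∀ x, 0 < π x) (hπsum : ∑ x, π x = 1)
    (hπinv : ∀ (g : G) (x : X), π (g • x) = π x)
    (P M : Matrix X X ℝ)
    (ν : G × G → ℝ) (hνnn : ∀ p, 0 ≤ ν p) (hνsum : ∑ p : G × G, ν p = 1)
    (hνsymm : ∀ p : G × G, ν p = ν (p.1⁻¹, p.2⁻¹))
    (hMinv : doubleAvg ν M = M)
    (hPdainv : doubleAvg ν (doubleAvg ν P) = doubleAvg ν P) :
    frobSq (P - M) = frobSq (P - doubleAvg ν P) + frobSq (doubleAvg ν P - M) := by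
  set Q := doubleAvg ν P with hQ
  have hB : doubleAvg ν (Q - M) = Q - M := by
    rw [doubleAvg_sub, hMinv, hPdainv]
  have hzero : innerM (P - Q) (Q - M) = 0 := by
    have h1 : innerM Q (Q - M) = innerM P (Q - M) := by
      rw [hQ, innerM_doubleAvg_swap ν hνsymm, hB]
    have h2 : innerM (P - Q) (Q - M) = innerM P (Q - M) - innerM Q (Q - M) := by
      simp only [innerM_apply]
      rw [← Finset.sum_sub_distrib]
      refine Finset.sum_congr rfl fun x _ => ?_
      rw [← Finset.sum_sub_distrib]
      refine Finset.sum_congr rfl fun y _ => ?_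
      simp only [Matrix.sub_apply]
      ring
    rw [h2, h1, sub_self]
  have hsplit : frobSq (P - M)
      = frobSq (P - Q) + frobSq (Q - M) + 2 * innerM (P - Q) (Q - M) := by
    unfold frobSq
    rw [innerM_apply, Finset.mul_sum, ← Finset.sum_add_distrib, ← Finset.sum_add_distrib]
    refine Finset.sum_congr rfl fun x _ => ?_
    rw [Finset.mul_sum, ← Finset.sum_add_distrib, ← Finset.sum_add_distrib]
    refine Finset.sum_congr rfl fun y _ => ?_
    simp only [Matrix.sub_apply]
    ring
  rw [hsplit, hzero]
  ring
end

section
/- Let X be finite, π full-support, and define the state-dependent averaging kernel Q(x, gx) := π(gx)/Σ_{h∈G} π(hx) for a finite group G acting on X (without assuming π is G-invariant). Then Q is a π-reversible stochastic matrix and equals the orthogonal projection in L²(π) onto the subspace V of G-invariant functions. -/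
open Matrix

/-- The state-dependent averaging kernel: `Q(x, y) = (Σ_{g : g•x = y} π(g•x)) / Z_G(x)`
with `Z_G(x) = Σ_{g∈G} π(g•x)`, i.e. `Q[f](x) = Z_G(x)⁻¹ Σ_g f(g•x) π(g•x)`. -/
noncomputable def stateDepAvg {X G : Type*} [Fintype X] [DecidableEq X] [Fintype G] [Group G]
    [MulAction G X] (π : X → ℝ) : Matrix X X ℝ :=
  fun x y => (∑ g : G, if y = g • x then π (g • x) else 0) / ∑ g : G, π (g • x)

section aux
variable {X G : Type*} [Fintype X] [DecidableEq X] [Fintype G] [Group G] [MulAction G X]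
  (π : X → ℝ)

lemma Z_pos (hπ : ∀ x, 0 < π x) (x : X) : 0 < ∑ g : G, π (g • x) :=
  Finset.sum_pos (fun g _ => hπ _) Finset.univ_nonempty

lemma Z_smul (g₀ : G) (x : X) : (∑ g : G, π (g • g₀ • x)) = ∑ g : G, π (g • x) := by
  simpa [mul_smul] using Equiv.sum_comp (Equiv.mulRight g₀) (fun g => π (g • x))

lemma Q_smul (g₀ : G) (x y : X) :
    stateDepAvg (G := G) π (g₀ • x) y = stateDepAvg (G := G) π x y := by
  unfold stateDepAvg
  rw [Z_smul]
  congr 1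
  simpa [mul_smul] using
    Equiv.sum_comp (Equiv.mulRight g₀) (fun g => if y = g • x then π (g • x) else 0)

lemma mulVec_formula (f : X → ℝ) (x : X) :
    (stateDepAvg (G := G) π).mulVec f x
      = (∑ g : G, π (g • x) * f (g • x)) / ∑ g : G, π (g • x) := by
  unfold stateDepAvg
  simp only [mulVec, dotProduct, div_mul_eq_mul_div, Finset.sum_mul, ← Finset.sum_div]
  congr 1
  rw [Finset.sum_comm]
  refine Finset.sum_congr rfl fun g _ => ?_
  simp [ite_mul]

end aux

/-- without assuming `π` is `G`-invariant, the state-dependent averaging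
kernel `Q` is a `π`-reversible stochastic matrix and is the orthogonal projection in
`L²(π)` onto the subspace `V` of `G`-invariant functions: it is idempotent,
self-adjoint with respect to `⟨·,·⟩_π`, fixes every `G`-invariant function, and its
range consists of `G`-invariant functions. -/
theorem stmt19 {X G : Type*} [Fintype X] [DecidableEq X] [Fintype G] [Group G] [MulAction G X]
    (π : X → ℝ) (hπpos : ∀ x, 0 < π x) (hπsum : ∑ x, π x = 1) :
    (∀ x y, 0 ≤ stateDepAvg (G := G) π x y) ∧
    (∀ x, ∑ y, stateDepAvg (G := G) π x y = 1) ∧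
    (∀ x y, π x * stateDepAvg (G := G) π x y = π y * stateDepAvg (G := G) π y x) ∧
    stateDepAvg (G := G) π * stateDepAvg (G := G) π = stateDepAvg (G := G) π ∧
    (∀ f : X → ℝ, (∀ (g : G) (x : X), f (g • x) = f x) →
      (stateDepAvg (G := G) π).mulVec f = f) ∧
    (∀ (f : X → ℝ) (g : G) (x : X),
      (stateDepAvg (G := G) π).mulVec f (g • x) = (stateDepAvg (G := G) π).mulVec f x) := by

  have hZ : ∀ x : X, (0:ℝ) < ∑ g : G, π (g • x) := Z_pos π hπpos
  refine ⟨?_, ?_, ?_, ?_, ?_, ?_⟩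
  · intro x y
    apply div_nonneg _ (hZ x).le
    refine Finset.sum_nonneg fun g _ => ?_
    split <;> [exact (hπpos _).le; rfl]
  · intro x
    have := mulVec_formula (G := G) π (fun _ => 1) x
    simp only [mulVec, dotProduct, mul_one] at this
    rw [this, div_self (hZ x).ne']
  · intro x y
    -- reversibility
    unfold stateDepAvg
    have hnum : ∀ a b : X, (∑ g : G, if b = g • a then π (g • a) else 0)
        = π b * ∑ g : G, if b = g • a then (1:ℝ) else 0 := by
      intro a b
      rw [Finset.mul_sum]
      refine Finset.sum_congr rfl fun g _ => ?_
      by_cases h : b = g • a <;> simp [h]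
    have hNsym : (∑ g : G, if y = g • x then (1:ℝ) else 0)
        = ∑ g : G, if x = g • y then (1:ℝ) else 0 := by
      rw [← Equiv.sum_comp (Equiv.inv G) (fun g => if x = g • y then (1:ℝ) else 0)]
      refine Finset.sum_congr rfl fun g _ => ?_
      simp [eq_inv_smul_iff, eq_comm]
    rw [hnum, hnum, hNsym]
    by_cases h : ∃ g : G, x = g • y
    · obtain ⟨g, rfl⟩ := h
      rw [Z_smul]
      ring
    · have h0 : (∑ g : G, if x = g • y then (1:ℝ) else 0) = 0 := by
        refine Finset.sum_eq_zero fun g _ => ?_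
        simp only [ite_eq_right_iff]
        exact fun hx => absurd ⟨g, hx⟩ h
      rw [h0]
      ring
  · ext x y
    simp only [Matrix.mul_apply]
    have : ∀ z, stateDepAvg (G := G) π x z * stateDepAvg (G := G) π z y
        = (∑ g : G, if z = g • x then π (g • x) * stateDepAvg (G := G) π x y else 0)
            / ∑ g : G, π (g • x) := by
      intro z
      rw [stateDepAvg, div_mul_eq_mul_div, Finset.sum_mul]
      congr 1
      refine Finset.sum_congr rfl fun g _ => ?_
      by_cases h : z = g • x
      · subst h; rw [Q_smul]; simp
      · simp [h]
    simp only [this, ← Finset.sum_div]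
    rw [Finset.sum_comm]
    have : ∀ g : G, (∑ z, if z = g • x then π (g • x) * stateDepAvg (G := G) π x y else 0)
        = π (g • x) * stateDepAvg (G := G) π x y := by
      intro g
      rw [Finset.sum_ite_eq' Finset.univ (g • x)
        (fun _ => π (g • x) * stateDepAvg (G := G) π x y), if_pos (Finset.mem_univ _)]
    simp only [this, ← Finset.sum_mul]
    rw [mul_comm, mul_div_assoc, div_self (hZ x).ne', mul_one]
  · intro f hf
    funext x
    rw [mulVec_formula]
    simp only [hf]
    rw [← Finset.sum_mul, mul_comm, mul_div_assoc, div_self (hZ x).ne', mul_one]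
  · intro f g x
    simp only [mulVec, dotProduct]
    exact Finset.sum_congr rfl fun y _ => by rw [Q_smul]
end
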